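/- arXiv:2310.03126 — 2 statements merged into one kernel-verified Lean document; each statement's English description precedes it below -/
import Mathlib

section
/- Let h : G ↷ H be an actor between étale groupoids with anchor ρ : H → G⁽⁰⁾. Suppose G is effective (the interior of the isotropy equals the unit space) and ρ is an open map. Then h is free: for every unit t ∈ H⁽⁰⁾ and every γ ∈ G with s(γ) = ρ(t), the equation γ·t = t implies γ ∈ G⁽⁰⁾. -/
open Topology

/-- A topological groupoid: a set with a partially defined multiplication
(`D a b` expresses composability), an inversion, satisfying the groupoid
axioms, such that inversion is continuous and multiplication is continuous
on the set of composable pairs. -/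
structure TopGroupoid (G : Type*) [TopologicalSpace G] where
  /-- composability -/
  D : G → G → Prop
  /-- partially defined multiplication (junk values off `D`) -/
  comp : G → G → G
  /-- inversion -/
  inv : G → G
  inv_inv : ∀ g, inv (inv g) = g
  d_inv : ∀ g, D g (inv g)
  d_eq : ∀ a b, D a b ↔ comp (inv a) a = comp b (inv b)
  d_comp_left : ∀ {a b c}, D a b → D b c → D (comp a b) c
  d_comp_right : ∀ {a b c}, D a b → D b c → D a (comp b c)
  assoc : ∀ {a b c}, D a b → D b c → comp (comp a b) c = comp a (comp b c)
  cancel_left : ∀ {g h}, D g h → comp (inv g) (comp g h) = h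
  cancel_right : ∀ {g h}, D g h → comp (comp g h) (inv h) = g
  continuous_inv : Continuous inv
  continuousOn_comp : ContinuousOn (fun p : G × G => comp p.1 p.2) {p | D p.1 p.2}

namespace TopGroupoid

variable {G : Type*} [TopologicalSpace G]

/-- The source map `s(γ) = γ⁻¹γ`. -/
def src (S : TopGroupoid G) (g : G) : G := S.comp (S.inv g) g

/-- The range map `r(γ) = γγ⁻¹`. -/
def rng (S : TopGroupoid G) (g : G) : G := S.comp g (S.inv g)

/-- The unit space `G⁽⁰⁾ = {γ⁻¹γ : γ ∈ G}`. -/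
def unitSpace (S : TopGroupoid G) : Set G := Set.range S.src

/-- A groupoid is étale if its range map is a local homeomorphism. -/
def IsEtale (S : TopGroupoid G) : Prop := IsLocalHomeomorph S.rng

/-- An open bisection: an open set on which both the source and the range map
are injective (hence, in an étale groupoid, restrict to homeomorphisms onto
their open images). -/
def IsOpenBisection (S : TopGroupoid G) (U : Set G) : Prop :=
  IsOpen U ∧ Set.InjOn S.src U ∧ Set.InjOn S.rng U

/-- Pointwise product of subsets: `U·V = {γη : γ ∈ U, η ∈ V, s γ = r η}`. -/
def setMul (S : TopGroupoid G) (U V : Set G) : Set G :=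
  {g | ∃ a ∈ U, ∃ b ∈ V, S.D a b ∧ g = S.comp a b}

/-- Pointwise inverse of a subset: `U⁻¹ = {γ⁻¹ : γ ∈ U}`. -/
def setInv (S : TopGroupoid G) (U : Set G) : Set G := S.inv '' U

end TopGroupoid

/-- An actor `G ↷ H`: a continuous left action of `G` on `H` (with anchor map
`ρ : H → G⁽⁰⁾`) which commutes with the right multiplication of `H` on itself. -/
structure Actor {G : Type*} {H : Type*} [TopologicalSpace G] [TopologicalSpace H]
    (S : TopGroupoid G) (T : TopGroupoid H) where
  /-- the anchor map -/
  rho : H → G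
  /-- the action multiplication, partially defined (junk off `s γ = ρ x`) -/
  act : G → H → H
  rho_mem : ∀ x, rho x ∈ S.unitSpace
  continuous_rho : Continuous rho
  continuousOn_act :
    ContinuousOn (fun p : G × H => act p.1 p.2) {p | S.src p.1 = rho p.2}
  rho_act : ∀ {γ x}, S.src γ = rho x → rho (act γ x) = S.rng γ
  act_assoc : ∀ {γ₁ γ₂ x}, S.D γ₁ γ₂ → S.src γ₂ = rho x →
      act γ₁ (act γ₂ x) = act (S.comp γ₁ γ₂) x
  act_unit : ∀ x, act (rho x) x = x
  rho_comp : ∀ {x y}, T.D x y → rho (T.comp x y) = rho x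
  src_act : ∀ {γ x}, S.src γ = rho x → T.src (act γ x) = T.src x
  act_right : ∀ {γ x y}, S.src γ = rho x → T.D x y →
      act γ (T.comp x y) = T.comp (act γ x) y

namespace Actor

variable {G H : Type*} [TopologicalSpace G] [TopologicalSpace H]
variable {S : TopGroupoid G} {T : TopGroupoid H}

/-- An actor is free if the only arrows fixing a unit are units. -/
def Free (A : Actor S T) : Prop :=
  ∀ t ∈ T.unitSpace, ∀ γ : G, S.src γ = A.rho t → A.act γ t = t → γ ∈ S.unitSpace

/-- An actor is proper if the anchor map restricted to the unit space of `H`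
is a proper map. -/
def Proper (A : Actor S T) : Prop := IsProperMap (T.unitSpace.restrict A.rho)

/-- `U·V = {γ·x : γ ∈ U, x ∈ V, s γ = ρ x}`. -/
def actSet (A : Actor S T) (U : Set G) (V : Set H) : Set H :=
  {y | ∃ γ ∈ U, ∃ x ∈ V, S.src γ = A.rho x ∧ y = A.act γ x}

end Actor

namespace TopGroupoid

variable {G : Type*} [TopologicalSpace G] (S : TopGroupoid G)

lemma d_inv' (g : G) : S.D (S.inv g) g := by
  have h := S.d_inv (S.inv g)
  rwa [S.inv_inv] at h

lemma rng_src (g : G) : S.rng (S.src g) = S.src g :=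
  ((S.d_eq g (S.src g)).mp (S.d_comp_right (S.d_inv g) (S.d_inv' g))).symm

lemma src_src (g : G) : S.src (S.src g) = S.src g := by
  have h := (S.d_eq (S.src g) (S.inv g)).mp (S.d_comp_left (S.d_inv' g) (S.d_inv g))
  rw [S.inv_inv] at h
  exact h

lemma src_inv (g : G) : S.src (S.inv g) = S.rng g := by
  simp only [src, rng, S.inv_inv]

lemma src_unit {u : G} (hu : u ∈ S.unitSpace) : S.src u = u := by
  obtain ⟨y, rfl⟩ := hu; exact S.src_src y

lemma rng_unit {u : G} (hu : u ∈ S.unitSpace) : S.rng u = u := by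
  obtain ⟨y, rfl⟩ := hu; exact S.rng_src y

lemma continuous_src : Continuous S.src :=
  S.continuousOn_comp.comp_continuous (S.continuous_inv.prodMk continuous_id)
    fun g => S.d_inv' g

lemma src_eq_rng_inv : S.src = S.rng ∘ S.inv := by
  funext g
  simp only [Function.comp, src, rng, S.inv_inv]

/-- The inversion as a homeomorphism. -/
def invHomeomorph : G ≃ₜ G where
  toFun := S.inv
  invFun := S.inv
  left_inv := S.inv_inv
  right_inv := S.inv_inv
  continuous_toFun := S.continuous_inv
  continuous_invFun := S.continuous_inv

lemma isLocalHomeomorph_src (h : S.IsEtale) : IsLocalHomeomorph S.src := by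
  rw [S.src_eq_rng_inv]
  exact h.comp S.invHomeomorph.isLocalHomeomorph

end TopGroupoid

/-- If `G` is effective (the interior of the isotropy is the unit space) and
the anchor map of an actor `h : G ↷ H` between étale groupoids is open, then
the actor is free. -/
theorem actor_free_of_effective_open_anchor {G H : Type*} [TopologicalSpace G]
    [TopologicalSpace H] {S : TopGroupoid G} {T : TopGroupoid H}
    (hS : S.IsEtale) (hT : T.IsEtale) (A : Actor S T)
    (heff : interior {γ : G | S.rng γ = S.src γ} = S.unitSpace)
    (hopen : IsOpenMap A.rho) :
    A.Free := by
  intro t ht γ hsγ hγt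
  -- a chart for `S.src` at `γ`
  obtain ⟨e, hγe, he⟩ := S.isLocalHomeomorph_src hS γ
  -- an open neighbourhood `f.target` of `t` consisting of units of `H`
  obtain ⟨f, htf, hfe⟩ := hT t
  have htN : t ∈ f.target := by
    have h2 : f t ∈ f.target := f.map_source htf
    rwa [← hfe, T.rng_unit ht] at h2
  have hNsub : f.target ⊆ T.unitSpace := by
    intro x hx
    refine ⟨T.inv (f.symm x), ?_⟩
    rw [T.src_inv, hfe]
    exact f.right_inv hx
  set W : Set H := A.rho ⁻¹' e.target with hW
  have hWopen : IsOpen W := e.open_target.preimage A.continuous_rho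
  have htW : t ∈ W := by
    show A.rho t ∈ e.target
    rw [← hsγ, he]
    exact e.map_source hγe
  set F : H → H := fun x => A.act (e.symm (A.rho x)) x with hF
  have hsrc_symm : ∀ x ∈ W, S.src (e.symm (A.rho x)) = A.rho x := by
    intro x hx
    rw [he]
    exact e.right_inv hx
  have hFcont : ContinuousOn F W := by
    have h1 : ContinuousOn (fun x => ((e.symm (A.rho x) : G), x)) W :=
      (e.continuousOn_symm.comp A.continuous_rho.continuousOn fun x hx => hx).prodMk
        continuousOn_id
    exact A.continuousOn_act.comp h1 fun x hx => hsrc_symm x hx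
  have heγ : e.symm (A.rho t) = γ := by
    rw [← hsγ, he]
    exact e.left_inv hγe
  have hFt : F t = t := by
    show A.act (e.symm (A.rho t)) t = t
    rw [heγ]
    exact hγt
  have hFn : F ⁻¹' f.target ∈ 𝓝 t := by
    have hct : ContinuousAt F t := hFcont.continuousAt (hWopen.mem_nhds htW)
    refine hct.preimage_mem_nhds (f.open_target.mem_nhds ?_)
    rw [hFt]; exact htN
  obtain ⟨V, hVsub, hVopen, htV⟩ := mem_nhds_iff.mp
    (Filter.inter_mem (Filter.inter_mem (hWopen.mem_nhds htW)
      (f.open_target.mem_nhds htN)) hFn)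
  set O : Set G := e.source ∩ S.src ⁻¹' (A.rho '' V) with hO
  have hOopen : IsOpen O := e.open_source.inter ((hopen V hVopen).preimage S.continuous_src)
  have hγO : γ ∈ O := ⟨hγe, ⟨t, htV, hsγ.symm⟩⟩
  have hOsub : O ⊆ {g | S.rng g = S.src g} := by
    rintro γ' ⟨hγ'e, x, hxV, hρx⟩
    obtain ⟨⟨hxW, hxN⟩, hxF⟩ := hVsub hxV
    have hsx : S.src γ' = A.rho x := hρx.symm
    have hxunit : T.src x = x := T.src_unit (hNsub hxN)
    have hesγ' : e.symm (A.rho x) = γ' := by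
      rw [hρx, he]
      exact e.left_inv hγ'e
    have hFx : F x ∈ T.unitSpace := hNsub hxF
    have hFx' : F x = A.act γ' x := by
      show A.act (e.symm (A.rho x)) x = A.act γ' x
      rw [hesγ']
    have hfix : A.act γ' x = x := by
      have h1 : T.src (A.act γ' x) = x := by rw [A.src_act hsx, hxunit]
      have h2 : T.src (A.act γ' x) = A.act γ' x := by
        rw [← hFx']; exact T.src_unit hFx
      rw [← h2, h1]
    have h3 := A.rho_act hsx
    rw [hfix, hρx] at h3
    exact h3.symm
  rw [← heff]
  exact mem_interior.mpr ⟨O, hOsub, hOopen, hγO⟩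
end

section
/- Let G and H be étale groupoids and φ : H → G a continuous groupoid homomorphism that restricts to a bijection H_t → G_{φ(t)} between source fibres for every unit t ∈ H⁽⁰⁾. Define ρ := φ∘r : H → G⁽⁰⁾ and, for (γ, x) with s(γ) = ρ(x), set γ·x := φ|_{H_{r(x)}}⁻¹(γ) · x (product in H). Then this defines an actor of G on H; in particular the multiplication map is continuous. -/
open Topology

section AuxLemmas

variable {G : Type*} [TopologicalSpace G] {S : TopGroupoid G} {a b g : G}

theorem tg_d_inv' (S : TopGroupoid G) (g : G) : S.D (S.inv g) g :=
  (S.d_eq _ _).2 (by rw [S.inv_inv])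

theorem tg_src_eq_rng_inv (S : TopGroupoid G) (g : G) : S.src g = S.rng (S.inv g) := by
  show S.comp (S.inv g) g = S.comp (S.inv g) (S.inv (S.inv g))
  rw [S.inv_inv]

theorem tg_rng_eq_src_inv (S : TopGroupoid G) (g : G) : S.rng g = S.src (S.inv g) := by
  show S.comp g (S.inv g) = S.comp (S.inv (S.inv g)) (S.inv g)
  rw [S.inv_inv]

theorem tg_src_comp (h : S.D a b) : S.src (S.comp a b) = S.src b := by
  have h2 := (S.d_eq _ _).1 (S.d_comp_left h (S.d_inv b))
  rw [S.inv_inv] at h2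
  exact h2

theorem tg_rng_comp (h : S.D a b) : S.rng (S.comp a b) = S.rng a := by
  have h2 := (S.d_eq _ _).1 (S.d_comp_right (tg_d_inv' S a) h)
  rw [S.inv_inv] at h2
  exact h2.symm

theorem tg_comp_rng_self (S : TopGroupoid G) (g : G) : S.comp (S.rng g) g = g := by
  have h := S.cancel_right (S.d_inv g)
  rwa [S.inv_inv] at h

theorem tg_comp_src_self (S : TopGroupoid G) (g : G) : S.comp g (S.src g) = g :=
  (S.assoc (S.d_inv g) (tg_d_inv' S g)).symm.trans (tg_comp_rng_self S g)

theorem tg_src_src (S : TopGroupoid G) (g : G) : S.src (S.src g) = S.src g :=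
  tg_src_comp (tg_d_inv' S g)

theorem tg_rng_src (S : TopGroupoid G) (g : G) : S.rng (S.src g) = S.src g :=
  (tg_rng_comp (tg_d_inv' S g)).trans (tg_src_eq_rng_inv S g).symm

theorem tg_src_rng (S : TopGroupoid G) (g : G) : S.src (S.rng g) = S.rng g := by
  rw [tg_rng_eq_src_inv S g]; exact tg_src_src S _

theorem tg_rng_rng (S : TopGroupoid G) (g : G) : S.rng (S.rng g) = S.rng g := by
  rw [tg_rng_eq_src_inv S g]; exact tg_rng_src S _

theorem tg_src_mem (S : TopGroupoid G) (g : G) : S.src g ∈ S.unitSpace := ⟨g, rfl⟩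

theorem tg_rng_mem (S : TopGroupoid G) (g : G) : S.rng g ∈ S.unitSpace :=
  ⟨S.inv g, (tg_rng_eq_src_inv S g).symm⟩

theorem tg_unit_rng (h : g ∈ S.unitSpace) : S.rng g = g := by
  obtain ⟨x, rfl⟩ := h; exact tg_rng_src S x

theorem tg_unit_src (h : g ∈ S.unitSpace) : S.src g = g := by
  obtain ⟨x, rfl⟩ := h; exact tg_src_src S x

/-- If `a b⁻¹` is a unit (and composable) then `a = b`. -/
theorem tg_cancel_of_unit (hD : S.D a (S.inv b))
    (hu : S.comp a (S.inv b) ∈ S.unitSpace) : a = b := by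
  set u := S.comp a (S.inv b) with hu_def
  have h1 : S.rng u = S.rng a := tg_rng_comp hD
  have h2 : S.src u = S.rng b := by
    rw [tg_src_comp hD]; exact (tg_rng_eq_src_inv S b).symm
  have h3 : u = S.rng a := (tg_unit_rng hu).symm.trans h1
  have h4 : S.rng b = S.rng a := h2.symm.trans ((tg_unit_src hu).trans h3)
  have hab : S.src a = S.src b := by
    have h5 := (S.d_eq _ _).1 hD
    rwa [S.inv_inv] at h5
  have h5 : u = S.rng b := h3.trans h4.symm
  have key : S.comp u b = b := by rw [h5]; exact tg_comp_rng_self S b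
  have h6 : S.comp u b = a := by
    rw [hu_def, S.assoc hD (tg_d_inv' S b)]
    show S.comp a (S.src b) = a
    rw [← hab]; exact tg_comp_src_self S a
  exact h6.symm.trans key

theorem tg_isLocalHomeomorph_src (S : TopGroupoid G) (hS : S.IsEtale) :
    IsLocalHomeomorph S.src := by
  have h : S.src = S.rng ∘ S.inv := funext fun g => tg_src_eq_rng_inv S g
  rw [h]
  exact hS.comp
    (Homeomorph.isLocalHomeomorph ⟨⟨S.inv, S.inv, S.inv_inv, S.inv_inv⟩,
      S.continuous_inv, S.continuous_inv⟩)

theorem tg_isOpen_unitSpace (S : TopGroupoid G) (hS : S.IsEtale) :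
    IsOpen S.unitSpace := by
  have hfix : S.unitSpace = {g | S.rng g = g} := by
    ext g
    constructor
    · rintro ⟨x, rfl⟩; exact tg_rng_src S x
    · intro h; rw [← h]; exact tg_rng_mem S g
  rw [hfix, isOpen_iff_forall_mem_open]
  rintro u hu
  obtain ⟨e, hue, hfe⟩ := hS u
  refine ⟨e.source ∩ S.rng ⁻¹' e.source, ?_, ?_, ?_⟩
  · rintro g ⟨hg1, hg2⟩
    have h1 : S.rng (S.rng g) = S.rng g := tg_rng_rng S g
    have h2 : (e : G → G) (S.rng g) = (e : G → G) g := by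
      rw [← hfe]; exact h1
    exact e.injOn hg2 hg1 h2
  · exact e.open_source.inter (e.open_source.preimage hS.continuous)
  · exact ⟨hue, by show S.rng u ∈ e.source; rwa [hu]⟩

end AuxLemmas

/-- A continuous groupoid homomorphism `φ : H → G` between étale groupoids
that is fibrewise bijective (restricts to a bijection between source fibres)
gives rise to an actor of `G` on `H` with anchor `ρ = φ ∘ r`, whose
multiplication `γ·x` is `y x` (product in `H`) for the unique `y` in the
source fibre of `r(x)` with `φ y = γ`. In particular, this action (being an
`Actor`) has continuous multiplication. -/
theorem fibrewise_bijective_gives_actor {G H : Type*} [TopologicalSpace G]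
    [TopologicalSpace H] (S : TopGroupoid G) (T : TopGroupoid H)
    (hS : S.IsEtale) (hT : T.IsEtale)
    (φ : H → G) (hcont : Continuous φ)
    (hD : ∀ {x y : H}, T.D x y → S.D (φ x) (φ y))
    (hcomp : ∀ {x y : H}, T.D x y → φ (T.comp x y) = S.comp (φ x) (φ y))
    (hinv : ∀ x : H, φ (T.inv x) = S.inv (φ x))
    (hbij : ∀ t ∈ T.unitSpace,
      Set.BijOn φ {x : H | T.src x = t} {g : G | S.src g = φ t}) :
    ∃ A : Actor S T,
      (A.rho = fun x => φ (T.rng x)) ∧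
      ∀ (γ : G) (x : H), S.src γ = φ (T.rng x) →
        ∃ y : H, φ y = γ ∧ T.src y = T.rng x ∧ A.act γ x = T.comp y x := by
  classical
  have φ_src : ∀ x : H, φ (T.src x) = S.src (φ x) := by
    intro x
    have h := hcomp (tg_d_inv' T x)
    rwa [hinv] at h
  have φ_rng : ∀ x : H, φ (T.rng x) = S.rng (φ x) := by
    intro x
    have h := hcomp (T.d_inv x)
    rwa [hinv] at h
  have hlift : ∀ (γ : G) (x : H), S.src γ = φ (T.rng x) →
      ∃ y : H, T.src y = T.rng x ∧ φ y = γ := by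
    intro γ x h
    obtain ⟨y, hy, hyγ⟩ := (hbij _ (tg_rng_mem T x)).surjOn
      (show γ ∈ {g : G | S.src g = φ (T.rng x)} from h)
    exact ⟨y, hy, hyγ⟩
  have huniq : ∀ (x : H) (y y' : H), T.src y = T.rng x → T.src y' = T.rng x →
      φ y = φ y' → y = y' := by
    intro x y y' hy hy' hφ
    exact (hbij _ (tg_rng_mem T x)).injOn hy hy' hφ
  have hDyx : ∀ {y x : H}, T.src y = T.rng x → T.D y x :=
    fun h => (T.d_eq _ _).2 h
  set actF : G → H → H := fun γ x =>
    if h : S.src γ = φ (T.rng x) then T.comp (Classical.choose (hlift γ x h)) x else x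
    with hactF
  have act_spec : ∀ {γ : G} {x : H} (h : S.src γ = φ (T.rng x)),
      T.src (Classical.choose (hlift γ x h)) = T.rng x ∧
      φ (Classical.choose (hlift γ x h)) = γ ∧
      actF γ x = T.comp (Classical.choose (hlift γ x h)) x := by
    intro γ x h
    obtain ⟨h1, h2⟩ := Classical.choose_spec (hlift γ x h)
    exact ⟨h1, h2, dif_pos h⟩
  have actF_eq : ∀ {γ : G} {x : H}, S.src γ = φ (T.rng x) →
      ∀ {y : H}, T.src y = T.rng x → φ y = γ → actF γ x = T.comp y x := by
    intro γ x h y hy hyφ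
    obtain ⟨h1, h2, h3⟩ := act_spec h
    rw [h3, huniq x _ y h1 hy (by rw [h2, hyφ])]
  -- continuity of the action
  have hcontAct : ContinuousOn (fun p : G × H => actF p.1 p.2)
      {p : G × H | S.src p.1 = φ (T.rng p.2)} := by
    set W : Set (G × H) := {p : G × H | S.src p.1 = φ (T.rng p.2)} with hW
    rintro ⟨γ₀, x₀⟩ hp₀
    have h₀ : S.src γ₀ = φ (T.rng x₀) := hp₀
    obtain ⟨hy₀s, hy₀φ, hact₀⟩ := act_spec h₀
    set y₀ := Classical.choose (hlift γ₀ x₀ h₀) with hy₀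
    obtain ⟨e, hy₀e, hse⟩ := tg_isLocalHomeomorph_src T hT y₀
    set U₁ : Set (G × H) := {p : G × H | T.rng p.2 ∈ e.target} with hU₁
    have hU₁open : IsOpen U₁ := e.open_target.preimage (hT.continuous.comp continuous_snd)
    have hrngx₀ : T.rng x₀ = e y₀ := by rw [← hy₀s, hse]
    have hp₀U₁ : (γ₀, x₀) ∈ U₁ := by
      show T.rng x₀ ∈ e.target
      rw [hrngx₀]; exact e.map_source hy₀e
    set ytil : H → H := fun x => e.symm (T.rng x) with hytil
    have hytilx₀ : ytil x₀ = y₀ := by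
      show e.symm (T.rng x₀) = y₀
      rw [hrngx₀]; exact e.left_inv hy₀e
    have hsrc_ytil : ∀ p : G × H, p ∈ U₁ → T.src (ytil p.2) = T.rng p.2 := by
      intro p hp
      show T.src (e.symm (T.rng p.2)) = T.rng p.2
      rw [hse]; exact e.right_inv hp
    have hcont_ytil : ContinuousOn (fun p : G × H => ytil p.2) U₁ :=
      e.continuousOn_symm.comp (hT.continuous.comp continuous_snd).continuousOn
        fun p hp => hp
    set gfun : G × H → G := fun p => S.comp (φ (ytil p.2)) (S.inv p.1) with hgfun
    have hφsrc_ytil : ∀ p : G × H, p ∈ W ∩ U₁ → S.src (φ (ytil p.2)) = S.src p.1 := by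
      intro p hp
      rw [← φ_src, hsrc_ytil p hp.2]
      exact hp.1.symm
    have hDg : ∀ p : G × H, p ∈ W ∩ U₁ → S.D (φ (ytil p.2)) (S.inv p.1) := by
      intro p hp
      refine (S.d_eq _ _).2 ?_
      show S.src (φ (ytil p.2)) = S.rng (S.inv p.1)
      rw [hφsrc_ytil p hp]
      exact tg_src_eq_rng_inv S p.1
    have hcontg : ContinuousOn gfun (W ∩ U₁) := by
      show ContinuousOn ((fun p : G × G => S.comp p.1 p.2) ∘
        fun p : G × H => (φ (ytil p.2), S.inv p.1)) (W ∩ U₁)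
      apply ContinuousOn.comp S.continuousOn_comp
      · exact ((hcont.comp_continuousOn (hcont_ytil.mono Set.inter_subset_right))).prodMk
          ((S.continuous_inv.comp continuous_fst).continuousOn)
      · intro p hp; exact hDg p hp
    have hgp₀ : gfun (γ₀, x₀) ∈ S.unitSpace := by
      show S.comp (φ (ytil x₀)) (S.inv γ₀) ∈ S.unitSpace
      rw [hytilx₀, hy₀φ]
      exact tg_rng_mem S γ₀
    have hnw : 𝓝[W ∩ U₁] ((γ₀ : G), x₀) = 𝓝[W] ((γ₀ : G), x₀) :=
      nhdsWithin_inter_of_mem' (mem_nhdsWithin_of_mem_nhds (hU₁open.mem_nhds hp₀U₁))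
    have hgcwa : ContinuousWithinAt gfun (W ∩ U₁) (γ₀, x₀) :=
      hcontg _ ⟨hp₀, hp₀U₁⟩
    have hunit_ev : ∀ᶠ p in 𝓝[W ∩ U₁] ((γ₀ : G), x₀), gfun p ∈ S.unitSpace :=
      hgcwa.eventually ((tg_isOpen_unitSpace S hS).eventually_mem hgp₀)
    have hEq' : ∀ᶠ p in 𝓝[W ∩ U₁] ((γ₀ : G), x₀),
        actF p.1 p.2 = T.comp (ytil p.2) p.2 := by
      filter_upwards [hunit_ev, self_mem_nhdsWithin] with p hgp hp
      have hφy : φ (ytil p.2) = p.1 := tg_cancel_of_unit (hDg p hp) hgp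
      exact actF_eq hp.1 (hsrc_ytil p hp.2) hφy
    have hFcont : ContinuousWithinAt (fun p : G × H => T.comp (ytil p.2) p.2) W (γ₀, x₀) := by
      have hco : ContinuousOn (fun p : G × H => T.comp (ytil p.2) p.2) U₁ := by
        show ContinuousOn ((fun p : H × H => T.comp p.1 p.2) ∘
          fun p : G × H => (ytil p.2, p.2)) U₁
        apply ContinuousOn.comp T.continuousOn_comp
        · exact hcont_ytil.prodMk continuous_snd.continuousOn
        · intro p hp; exact hDyx (hsrc_ytil p hp)
      exact (hco.continuousAt (hU₁open.mem_nhds hp₀U₁)).continuousWithinAt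
    refine hFcont.congr_of_eventuallyEq ?_ ?_
    · rw [← hnw]; exact hEq'
    · show actF γ₀ x₀ = T.comp (ytil x₀) x₀
      rw [hact₀, hytilx₀]
  refine ⟨{ rho := fun x => φ (T.rng x)
            act := actF
            rho_mem := fun x => by
              show φ (T.rng x) ∈ S.unitSpace
              rw [φ_rng]; exact tg_rng_mem S (φ x)
            continuous_rho := hcont.comp hT.continuous
            continuousOn_act := hcontAct
            rho_act := by
              intro γ x h
              obtain ⟨h1, h2, h3⟩ := act_spec h
              show φ (T.rng (actF γ x)) = S.rng γ
              rw [h3, tg_rng_comp (hDyx h1), φ_rng, h2]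
            act_assoc := by
              intro γ₁ γ₂ x h12 h2
              have h2' : S.src γ₂ = φ (T.rng x) := h2
              obtain ⟨h2s, h2φ, h2e⟩ := act_spec h2'
              have h1' : S.src γ₁ = φ (T.rng (actF γ₂ x)) := by
                rw [h2e, tg_rng_comp (hDyx h2s), φ_rng, h2φ]
                exact (S.d_eq _ _).1 h12
              obtain ⟨h1s, h1φ, h1e⟩ := act_spec h1'
              have h12' : S.src (S.comp γ₁ γ₂) = φ (T.rng x) := by
                rw [tg_src_comp h12]; exact h2'
              have hy12 : T.D (Classical.choose (hlift γ₁ (actF γ₂ x) h1'))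
                  (Classical.choose (hlift γ₂ x h2')) := by
                refine hDyx ?_
                rw [h1s, h2e, tg_rng_comp (hDyx h2s)]
              have hrhs : actF (S.comp γ₁ γ₂) x =
                  T.comp (T.comp (Classical.choose (hlift γ₁ (actF γ₂ x) h1'))
                    (Classical.choose (hlift γ₂ x h2'))) x := by
                refine actF_eq h12' ?_ ?_
                · rw [tg_src_comp hy12]; exact h2s
                · rw [hcomp hy12, h1φ, h2φ]
              show actF γ₁ (actF γ₂ x) = actF (S.comp γ₁ γ₂) x
              exact h1e.trans ((congrArg _ h2e).trans
                ((T.assoc hy12 (hDyx h2s)).symm.trans hrhs.symm))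
            act_unit := by
              intro x
              have hu : S.src (φ (T.rng x)) = φ (T.rng x) := by
                rw [← φ_src, tg_src_rng T x]
              show actF (φ (T.rng x)) x = x
              rw [actF_eq hu (tg_src_rng T x) rfl]
              exact tg_comp_rng_self T x
            rho_comp := by
              intro x y hxy
              show φ (T.rng (T.comp x y)) = φ (T.rng x)
              rw [tg_rng_comp hxy]
            src_act := by
              intro γ x h
              obtain ⟨h1, h2, h3⟩ := act_spec h
              show T.src (actF γ x) = T.src x
              rw [h3, tg_src_comp (hDyx h1)]
            act_right := by
              intro γ x y h hxy
              have h' : S.src γ = φ (T.rng x) := h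
              obtain ⟨h1, h2, h3⟩ := act_spec h'
              have h'' : S.src γ = φ (T.rng (T.comp x y)) := by
                rw [tg_rng_comp hxy]; exact h'
              have hl : actF γ (T.comp x y) =
                  T.comp (Classical.choose (hlift γ x h')) (T.comp x y) := by
                refine actF_eq h'' ?_ h2
                rw [tg_rng_comp hxy]; exact h1
              show actF γ (T.comp x y) = T.comp (actF γ x) y
              rw [hl, h3, ← T.assoc (hDyx h1) hxy] },
    rfl, ?_⟩
  intro γ x h
  obtain ⟨h1, h2, h3⟩ := act_spec h
  exact ⟨_, h2, h1, h3⟩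
end
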